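/- For a composition J of n of length s > 1 with some descent p, the sum ∑_{I ⊨ n} ∏_{d ∈ Des(I)} (-t_d) · ∏_{k ∈ 𝒜(I,J)} t_{j_k} vanishes; for J = (n), this sum equals (1-t_1)(1-t_2)···(1-t_{n-1})·(1-t_n)/(1-t_n), i.e. ∏_{d=1}^{n-1}(1+(-t_d)) summed over all descent subsets gives ∏_{d=1}^{n-1}(1-t_d). -/

import Mathlib

open scoped BigOperators

/-- The descent set of a composition `I` of `n`: the partial sums
`i_1 + ⋯ + i_k` for `1 ≤ k ≤ ℓ(I) - 1`. -/
def desSet {n : ℕ} (I : Composition n) : Finset ℕ :=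
  ((List.range (I.length - 1)).map (fun k => (I.blocks.take (k+1)).sum)).toFinset

/-- `𝒜(I,J) = {k < ℓ(J) : j_1 + ⋯ + j_k ∉ Des(I)}`. -/
def AAcomp {n : ℕ} (I J : Composition n) : Finset ℕ :=
  (Finset.Icc 1 (J.length - 1)).filter (fun k => (J.blocks.take k).sum ∉ desSet I)

/-- The `k`-th part (1-indexed) of a composition. -/
def part {n : ℕ} (J : Composition n) (k : ℕ) : ℕ := J.blocks.getD (k-1) 0

/-- `Sym`, the algebra of noncommutative symmetric functions, realized as the
free associative algebra on the complete functions `S_1, S_2, …`;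
`Sgen n` is the generator `S_n`. -/
noncomputable def Sgen (R : Type*) [CommRing R] (n : ℕ) : FreeAlgebra R ℕ :=
  FreeAlgebra.ι R n

/-- `S^J = S_{j_1} ⋯ S_{j_r}` for a list of parts `J`. -/
noncomputable def SJ (R : Type*) [CommRing R] (J : List ℕ) : FreeAlgebra R ℕ :=
  (J.map (Sgen R)).prod

/-- The multiparameter analogue `ℛ_I(t; A)` of the `(1-t)`-transformed ribbon:
`ℛ_I = (-1)^{ℓ(I)} ∑_{J ⊨ n} (-1)^{ℓ(J)} (1 - t_{j_r}) (∏_{k ∈ 𝒜(I,J)} t_{j_k}) S^J`. -/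
noncomputable def Rr {R : Type*} [CommRing R] (t : ℕ → R) {n : ℕ} (I : Composition n) :
    FreeAlgebra R ℕ :=
  ∑ J : Composition n,
    ((-1 : R) ^ I.length * (-1 : R) ^ J.length
        * (1 - t (part J J.length)) * ∏ k ∈ AAcomp I J, t (part J k)) • SJ R J.blocks

/-- `𝒮^I(t) = ∑_{J ≤ I} ℛ_J(t)`, the sum over compositions `J` coarser than `I`. -/
noncomputable def Ss {R : Type*} [CommRing R] (t : ℕ → R) {n : ℕ} (I : Composition n) :
    FreeAlgebra R ℕ :=
  ∑ J ∈ Finset.univ.filter (fun J : Composition n => desSet J ⊆ desSet I), Rr t J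

/-- Concatenation `IJ` of compositions. -/
def concatComp {m n : ℕ} (I : Composition m) (J : Composition n) : Composition (m+n) :=
  ⟨I.blocks ++ J.blocks,
   fun hi => by
      rcases List.mem_append.mp hi with h | h
      · exact I.blocks_pos h
      · exact J.blocks_pos h,
   by rw [List.sum_append, I.blocks_sum, J.blocks_sum]⟩

/-- Near-concatenation `I ▷ J = (i_1, …, i_{r-1}, i_r + j_1, j_2, …, j_s)`. -/
def nearConcat {m n : ℕ} (hm : 0 < m) (hn : 0 < n)
    (I : Composition m) (J : Composition n) : Composition (m+n) := by
  have hI : I.blocks ≠ [] := by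
    intro h
    rw [← I.blocks_sum, h] at hm
    exact absurd hm (by simp)
  have hJ : J.blocks ≠ [] := by
    intro h
    rw [← J.blocks_sum, h] at hn
    exact absurd hn (by simp)
  refine ⟨I.blocks.dropLast ++ (I.blocks.getLast hI + J.blocks.head hJ) :: J.blocks.tail,
    ?_, ?_⟩
  · intro i hi
    rcases List.mem_append.mp hi with h | h
    · exact I.blocks_pos (List.dropLast_subset _ h)
    · rcases List.mem_cons.mp h with h | h
      · subst h
        exact Nat.add_pos_left (I.blocks_pos (List.getLast_mem hI)) _
      · exact J.blocks_pos (List.mem_of_mem_tail h)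
  · have h1 := congrArg List.sum (List.dropLast_append_getLast hI)
    have h2 := congrArg List.sum (List.cons_head_tail hJ)
    rw [I.blocks_sum] at h1
    rw [J.blocks_sum] at h2
    simp only [List.sum_append, List.sum_cons, List.sum_nil, add_zero] at h1 h2
    rw [List.sum_append, List.sum_cons]
    omega

section StmtFiveAux

variable {n : ℕ}

/-- Strict monotonicity of partial sums of a composition in the relevant range. -/
lemma sizeUpTo_lt_aux (I : Composition n) {a b : ℕ} (hab : a < b) (hb : b ≤ I.length) :
    I.sizeUpTo a < I.sizeUpTo b :=
  lt_of_lt_of_le (I.sizeUpTo_strict_mono (lt_of_lt_of_le hab hb))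
    (I.monotone_sizeUpTo (by omega))

lemma mem_desSet_iff_aux (I : Composition n) (m : ℕ) :
    m ∈ desSet I ↔ ∃ k, k < I.length - 1 ∧ I.sizeUpTo (k + 1) = m := by
  simp [desSet, Composition.sizeUpTo]

lemma mem_boundaries_iff_aux (I : Composition n) (j : Fin (n + 1)) :
    j ∈ I.boundaries ↔ ∃ k ≤ I.length, I.sizeUpTo k = (j : ℕ) := by
  constructor
  · intro hj
    rcases Finset.mem_map.1 hj with ⟨k, -, hk⟩
    refine ⟨k, Nat.lt_succ_iff.1 k.isLt, ?_⟩
    rw [← hk]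
    rfl
  · rintro ⟨k, hk, hkj⟩
    refine Finset.mem_map.2 ⟨⟨k, Nat.lt_succ_of_le hk⟩, Finset.mem_univ _, ?_⟩
    ext
    exact hkj

lemma mem_compositionAsSetEquiv_iff_aux (I : Composition n) (i : Fin (n - 1)) :
    i ∈ (compositionAsSetEquiv n) I.toCompositionAsSet ↔
      ∃ k ≤ I.length, I.sizeUpTo k = 1 + (i : ℕ) := by
  have h : i ∈ (compositionAsSetEquiv n) I.toCompositionAsSet ↔
      (⟨1 + (i : ℕ), by
          have := i.isLt; omega⟩ : Fin n.succ) ∈ I.boundaries := by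
    simp only [compositionAsSetEquiv, Equiv.coe_fn_mk, Set.mem_toFinset, Set.mem_setOf_eq]
    rfl
  rw [h, mem_boundaries_iff_aux]

lemma desSet_eq_image_aux (I : Composition n) :
    desSet I = ((compositionAsSetEquiv n) I.toCompositionAsSet).image
      (fun i : Fin (n - 1) => 1 + (i : ℕ)) := by
  ext m
  rw [Finset.mem_image, mem_desSet_iff_aux]
  constructor
  · rintro ⟨k, hk, rfl⟩
    have hlen : k + 1 < I.length := by omega
    have h1 : 0 < I.sizeUpTo (k + 1) := by
      have := sizeUpTo_lt_aux I (Nat.succ_pos k) (le_of_lt hlen)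
      simpa [Composition.sizeUpTo] using this
    have h2 : I.sizeUpTo (k + 1) < n := by
      have := sizeUpTo_lt_aux I hlen le_rfl
      rwa [I.sizeUpTo_length] at this
    refine ⟨⟨I.sizeUpTo (k + 1) - 1, by omega⟩, ?_, by simp; omega⟩
    rw [mem_compositionAsSetEquiv_iff_aux]
    exact ⟨k + 1, hlen.le, by simp; omega⟩
  · rintro ⟨i, hi, rfl⟩
    rw [mem_compositionAsSetEquiv_iff_aux] at hi
    rcases hi with ⟨k, hk, hki⟩
    have hk0 : k ≠ 0 := by
      intro h
      rw [h, I.sizeUpTo_zero] at hki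
      omega
    have hklt : k < I.length := by
      rcases lt_or_eq_of_le hk with h | h
      · exact h
      · exfalso
        rw [h, I.sizeUpTo_length] at hki
        have := i.isLt
        omega
    exact ⟨k - 1, by omega, by rw [show k - 1 + 1 = k by omega]; exact hki⟩

lemma sum_desSet_aux {R : Type*} [CommRing R] (F : Finset ℕ → R) :
    ∑ I : Composition n, F (desSet I) =
      ∑ s : Finset (Fin (n - 1)), F (s.image (fun i : Fin (n - 1) => 1 + (i : ℕ))) := by
  apply Fintype.sum_equiv ((compositionEquiv n).trans (compositionAsSetEquiv n))
  intro I
  rw [desSet_eq_image_aux]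
  rfl

lemma shift_inj_aux : Function.Injective (fun i : Fin (n - 1) => 1 + (i : ℕ)) := by
  intro a b hab
  simp only at hab
  exact Fin.ext (by omega)

end StmtFiveAux

/-- the key computation for the inverse of `θ_t`.
For a composition `J` of `n` of length `> 1` (so having some descent), the sum
`∑_{I ⊨ n} (∏_{d ∈ Des(I)} (-t_d)) ∏_{k ∈ 𝒜(I,J)} t_{j_k}` vanishes;
for `J = (n)` (where `𝒜(I,(n)) = ∅`) it equals `∏_{d=1}^{n-1} (1 - t_d)`. -/
theorem stmt_5 {R : Type*} [CommRing R] (t : ℕ → R) {n : ℕ} (hn : 0 < n) :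
    (∀ J : Composition n, 1 < J.length →
      ∑ I : Composition n,
        (∏ d ∈ desSet I, (- t d)) * ∏ k ∈ AAcomp I J, t (part J k) = 0) ∧
    ∑ I : Composition n, (∏ d ∈ desSet I, (- t d)) =
      ∏ d ∈ Finset.Icc 1 (n-1), (1 - t d) := by
  constructor
  · intro J hJ
    set f : Fin (n - 1) → ℕ := fun i => 1 + (i : ℕ) with hf
    set F : Finset ℕ → R := fun D => (∏ d ∈ D, (- t d)) *
      ∏ k ∈ (Finset.Icc 1 (J.length - 1)).filter
          (fun k => (J.blocks.take k).sum ∉ D), t (part J k) with hF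
    have hrw : ∑ I : Composition n,
        (∏ d ∈ desSet I, (- t d)) * ∏ k ∈ AAcomp I J, t (part J k)
        = ∑ s : Finset (Fin (n - 1)), F (s.image f) :=
      sum_desSet_aux F
    rw [hrw]
    -- basic facts about J
    have hLn : J.length ≤ n := J.length_le
    have hn2 : 2 ≤ n := by omega
    have hP1pos : 0 < (J.blocks.take 1).sum := by
      have := sizeUpTo_lt_aux J (show 0 < 1 by omega) (by omega)
      simpa [Composition.sizeUpTo] using this
    have hP1lt : (J.blocks.take 1).sum < n := by
      have := sizeUpTo_lt_aux J hJ le_rfl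
      rw [J.sizeUpTo_length] at this
      calc (J.blocks.take 1).sum = J.sizeUpTo 1 := rfl
        _ < n := by
          have h2 := sizeUpTo_lt_aux J hJ le_rfl
          rw [J.sizeUpTo_length] at h2
          exact h2
    have hP1head : (J.blocks.take 1).sum = J.blocks.getD 0 0 := by
      rcases hb : J.blocks with _ | ⟨a, l⟩
      · exfalso
        have : J.length = 0 := by simp [Composition.length, hb]
        omega
      · simp
    set p : Fin (n - 1) := ⟨(J.blocks.take 1).sum - 1, by omega⟩ with hp
    have hfp : f p = (J.blocks.take 1).sum := by
      simp only [hf, hp]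
      omega
    -- the pairing
    have hpair : ∀ s : Finset (Fin (n - 1)), p ∉ s →
        F (s.image f) + F ((insert p s).image f) = 0 := by
      intro s hps
      have hnotmem : (J.blocks.take 1).sum ∉ s.image f := by
        intro hmem
        rcases Finset.mem_image.1 hmem with ⟨i, his, hif⟩
        have : i = p := by
          apply shift_inj_aux
          show f i = f p
          rw [hif, hfp]
        exact hps (this ▸ his)
      have himg : (insert p s).image f
          = insert ((J.blocks.take 1).sum) (s.image f) := by
        rw [Finset.image_insert, hfp]
      -- the filter identity
      have hPinj : ∀ k, 1 ≤ k → k ≤ J.length - 1 →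
          ((J.blocks.take k).sum = (J.blocks.take 1).sum ↔ k = 1) := by
        intro k hk1 hk2
        constructor
        · intro hkeq
          by_contra hne
          have h2k : 2 ≤ k := by omega
          have := sizeUpTo_lt_aux J (show 1 < k by omega) (by omega)
          simp only [Composition.sizeUpTo] at this
          omega
        · intro h; rw [h]
      have hfilter : (Finset.Icc 1 (J.length - 1)).filter
            (fun k => (J.blocks.take k).sum ∉ insert ((J.blocks.take 1).sum) (s.image f))
          = ((Finset.Icc 1 (J.length - 1)).filter
            (fun k => (J.blocks.take k).sum ∉ s.image f)).erase 1 := by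
        ext k
        simp only [Finset.mem_erase, Finset.mem_filter, Finset.mem_insert, Finset.mem_Icc,
          not_or]
        constructor
        · rintro ⟨⟨hk1, hk2⟩, hne, hnmem⟩
          exact ⟨fun h => hne (by rw [h]), ⟨hk1, hk2⟩, hnmem⟩
        · rintro ⟨hne, ⟨hk1, hk2⟩, hnmem⟩
          exact ⟨⟨hk1, hk2⟩, fun h => hne ((hPinj k hk1 hk2).1 h), hnmem⟩
      have hone : 1 ∈ (Finset.Icc 1 (J.length - 1)).filter
          (fun k => (J.blocks.take k).sum ∉ s.image f) := by
        simp only [Finset.mem_filter, Finset.mem_Icc]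
        exact ⟨⟨le_refl 1, by omega⟩, hnotmem⟩
      have hprodA : ∏ k ∈ (Finset.Icc 1 (J.length - 1)).filter
            (fun k => (J.blocks.take k).sum ∉ s.image f), t (part J k)
          = t (part J 1) * ∏ k ∈ ((Finset.Icc 1 (J.length - 1)).filter
            (fun k => (J.blocks.take k).sum ∉ s.image f)).erase 1, t (part J k) :=
        (Finset.mul_prod_erase _ _ hone).symm
      have hpart1 : part J 1 = (J.blocks.take 1).sum := by
        rw [part, hP1head]
      simp only [hF, himg, hfilter,
        Finset.prod_insert hnotmem, hprodA, hpart1]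
      ring
    -- sum over all subsets, paired
    have huniv : (Finset.univ : Finset (Fin (n - 1)))
        = insert p (Finset.univ.erase p) :=
      (Finset.insert_erase (Finset.mem_univ p)).symm
    calc ∑ s : Finset (Fin (n - 1)), F (s.image f)
        = ∑ s ∈ (Finset.univ : Finset (Fin (n - 1))).powerset, F (s.image f) := by
          rw [Finset.powerset_univ]
      _ = ∑ s ∈ (insert p (Finset.univ.erase p)).powerset, F (s.image f) := by
          rw [← huniv]
      _ = (∑ s ∈ (Finset.univ.erase p).powerset, F (s.image f))
            + ∑ s ∈ (Finset.univ.erase p).powerset, F ((insert p s).image f) :=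
          Finset.sum_powerset_insert (Finset.notMem_erase p _) _
      _ = ∑ s ∈ (Finset.univ.erase p).powerset,
            (F (s.image f) + F ((insert p s).image f)) := by
          rw [Finset.sum_add_distrib]
      _ = 0 := by
          apply Finset.sum_eq_zero
          intro s hs
          apply hpair
          intro hpss
          exact Finset.notMem_erase p _ ((Finset.mem_powerset.1 hs) hpss)
  · have hrw : ∑ I : Composition n, (∏ d ∈ desSet I, (- t d))
        = ∑ s : Finset (Fin (n - 1)),
            ∏ d ∈ s.image (fun i : Fin (n - 1) => 1 + (i : ℕ)), (- t d) :=
      sum_desSet_aux (fun D => ∏ d ∈ D, (- t d))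
    rw [hrw]
    have hstep : ∀ s : Finset (Fin (n - 1)),
        ∏ d ∈ s.image (fun i : Fin (n - 1) => 1 + (i : ℕ)), (- t d)
          = ∏ i ∈ s, (- t (1 + (i : ℕ))) := by
      intro s
      exact Finset.prod_image (fun a _ b _ hab => shift_inj_aux hab)
    calc ∑ s : Finset (Fin (n - 1)),
          ∏ d ∈ s.image (fun i : Fin (n - 1) => 1 + (i : ℕ)), (- t d)
        = ∑ s ∈ (Finset.univ : Finset (Fin (n - 1))).powerset,
            (∏ i ∈ s, (- t (1 + (i : ℕ))))
              * ∏ i ∈ (Finset.univ : Finset (Fin (n - 1))) \ s, (1 : R) := by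
          rw [Finset.powerset_univ]
          exact Finset.sum_congr rfl (fun s _ => by rw [hstep s, Finset.prod_const_one,
            mul_one])
      _ = ∏ i : Fin (n - 1), ((- t (1 + (i : ℕ))) + 1) :=
          (Finset.prod_add _ _ _).symm
      _ = ∏ i ∈ Finset.range (n - 1), ((- t (1 + i)) + 1) :=
          Fin.prod_univ_eq_prod_range (fun i => (- t (1 + i)) + 1) (n - 1)
      _ = ∏ i ∈ Finset.Ico 1 n, ((- t i) + 1) := by
          rw [Finset.prod_Ico_eq_prod_range]
      _ = ∏ d ∈ Finset.Icc 1 (n - 1), (1 - t d) := by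
          rw [show Finset.Icc 1 (n - 1) = Finset.Ico 1 n by
            rw [← Finset.Ico_add_one_right_eq_Icc]; congr 1; omega]
          exact Finset.prod_congr rfl (fun d _ => by ring)
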